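/- Let A ∈ ℝ^{m×n}, B ∈ ℝ^{m×l}, C ∈ ℝ^{p×n}, D ∈ ℝ^{p×l}, E ∈ ℝ^{q×l}. If A has full row rank (rank A = m) and R(A) ∩ R(C) = {0}, then the row space of the block matrix [B | A] intersects the row space of the block matrix [[E, 0],[D, C]] trivially. -/

import Mathlib

open Matrix

/-- The row space of a matrix: the span of its rows. -/
def rowSpace {m n : Type*} [Fintype n] (A : Matrix m n ℝ) : Submodule ℝ (n → ℝ) :=
  Submodule.span ℝ (Set.range fun i => A i)

/-- If `A` has full row rank and `R(A) ∩ R(C) = {0}`, then the row space of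
`[B | A]` intersects the row space of `[[E, 0],[D, C]]` trivially. -/
theorem stmt3 (m n l p q : ℕ)
    (A : Matrix (Fin m) (Fin n) ℝ) (B : Matrix (Fin m) (Fin l) ℝ)
    (C : Matrix (Fin p) (Fin n) ℝ) (D : Matrix (Fin p) (Fin l) ℝ)
    (E : Matrix (Fin q) (Fin l) ℝ)
    (hA : A.rank = m)
    (hAC : rowSpace A ⊓ rowSpace C = ⊥) :
    rowSpace (Matrix.fromCols B A) ⊓
      rowSpace (Matrix.fromBlocks E (0 : Matrix (Fin q) (Fin n) ℝ) D C) = ⊥ := by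
  -- rows of A are linearly independent
  have hli : LinearIndependent ℝ (fun i => A i) := by
    rw [linearIndependent_iff_card_eq_finrank_span]
    rw [Set.finrank, Fintype.card_fin]
    rw [Matrix.rank_eq_finrank_span_row] at hA
    exact hA.symm
  rw [Submodule.eq_bot_iff]
  rintro v ⟨hv1, hv2⟩
  rw [SetLike.mem_coe, rowSpace, Submodule.mem_span_range_iff_exists_fun] at hv1 hv2
  obtain ⟨c, hc⟩ := hv1
  obtain ⟨d, hd⟩ := hv2
  -- project to the last n coordinates
  set π : ((Fin l ⊕ Fin n) → ℝ) →ₗ[ℝ] (Fin n → ℝ) := LinearMap.funLeft ℝ ℝ Sum.inr with hπ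
  have h1 : ∑ i, c i • A i = π v := by
    rw [← hc]
    simp [π, LinearMap.funLeft]
    funext j
    simp [Matrix.fromCols]
  have h2 : π v ∈ rowSpace C := by
    rw [← hd]
    simp only [map_sum, _root_.map_smul]
    rw [Fintype.sum_sum_type]
    have hz : ∀ i : Fin q,
        π ((Matrix.fromBlocks E (0 : Matrix (Fin q) (Fin n) ℝ) D C) (Sum.inl i)) = 0 := by
      intro i
      funext j
      simp [π, LinearMap.funLeft, Matrix.fromBlocks]
    have hC : ∀ i : Fin p,
        π ((Matrix.fromBlocks E (0 : Matrix (Fin q) (Fin n) ℝ) D C) (Sum.inr i)) = C i := by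
      intro i
      rfl
    simp only [hz, hC, smul_zero, Finset.sum_const_zero, zero_add]
    exact Submodule.sum_mem _ fun i _ => Submodule.smul_mem _ _
      (Submodule.subset_span ⟨i, rfl⟩)
  have h3 : π v ∈ rowSpace A := by
    rw [← h1]
    exact Submodule.sum_mem _ fun i _ => Submodule.smul_mem _ _
      (Submodule.subset_span ⟨i, rfl⟩)
  have h4 : π v = 0 := by
    have := hAC ▸ (Submodule.mem_inf.mpr ⟨h3, h2⟩)
    simpa using this
  have hc0 : ∀ i, c i = 0 := by
    have := linearIndependent_iff'.mp hli Finset.univ c (by rw [h1, h4])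
    exact fun i => this i (Finset.mem_univ i)
  rw [← hc]
  simp [hc0]
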